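/- Let T, n, p ∈ ℕ, let Xᵗ ∈ ℝ^{n×p} and Yᵗ ∈ ℝⁿ for t = 1,…,T, and let μ, λ > 0 with λ > μ. Then every global minimizer (Θ_c*, Θ_s*) of the Dirty-model objective F(Θ_c, Θ_s) = Σ_{t=1}^T (1/(2n))‖Xᵗ(θ_cᵗ + θ_sᵗ) − Yᵗ‖₂² + μ‖Θ_c‖_{2,1} + λ‖Θ_s‖₁ satisfies Θ_s* = 0. -/

import Mathlib

open scoped BigOperators

/-- Dirty multi-task objective:
`F(Θc, Θs) = ∑ t, (1/(2n)) ‖Xᵗ (θcᵗ + θsᵗ) - Yᵗ‖₂² + μ ‖Θc‖_{2,1} + λ ‖Θs‖₁`. -/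
noncomputable def dirtyObj {T n p : ℕ} (X : Fin T → Matrix (Fin n) (Fin p) ℝ)
    (Y : Fin T → Fin n → ℝ) (μ lam : ℝ)
    (Θc Θs : Matrix (Fin p) (Fin T) ℝ) : ℝ :=
  (∑ t, (1 / (2 * (n : ℝ))) *
      ∑ i, ((X t).mulVec (fun j => Θc j t + Θs j t) i - Y t i) ^ 2)
    + μ * ∑ j, Real.sqrt (∑ t, (Θc j t) ^ 2)
    + lam * ∑ j, ∑ t, |Θs j t|

lemma sqrt_sum_sq_add_le {T : ℕ} (a b : Fin T → ℝ) :
    Real.sqrt (∑ t, (a t + b t) ^ 2) ≤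
      Real.sqrt (∑ t, (a t) ^ 2) + ∑ t, |b t| := by
  have hb : Real.sqrt (∑ t, (b t) ^ 2) ≤ ∑ t, |b t| := by
    rw [show (∑ t, |b t|) = Real.sqrt ((∑ t, |b t|) ^ 2) from
      (Real.sqrt_sq (Finset.sum_nonneg fun t _ => abs_nonneg _)).symm]
    apply Real.sqrt_le_sqrt
    have : ∀ t : Fin T, (b t) ^ 2 ≤ |b t| * ∑ s, |b s| := by
      intro t
      have h1 : |b t| ≤ ∑ s, |b s| :=
        Finset.single_le_sum (fun s _ => abs_nonneg (b s)) (Finset.mem_univ t)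
      calc (b t) ^ 2 = |b t| * |b t| := by rw [← sq_abs]; ring
        _ ≤ |b t| * ∑ s, |b s| := mul_le_mul_of_nonneg_left h1 (abs_nonneg _)
    calc ∑ t, (b t) ^ 2 ≤ ∑ t, |b t| * ∑ s, |b s| := Finset.sum_le_sum fun t _ => this t
      _ = (∑ t, |b t|) ^ 2 := by rw [← Finset.sum_mul]; ring
  have tri : Real.sqrt (∑ t, (a t + b t) ^ 2) ≤
      Real.sqrt (∑ t, (a t) ^ 2) + Real.sqrt (∑ t, (b t) ^ 2) := by
    have := norm_add_le (E := EuclideanSpace ℝ (Fin T)) (WithLp.toLp 2 a) (WithLp.toLp 2 b)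
    simpa [EuclideanSpace.norm_eq, sq_abs] using this
  linarith

/-- If `λ > μ`, every global minimizer `(Θc⋆, Θs⋆)` of the Dirty-model objective
satisfies `Θs⋆ = 0` (the model reduces to a group-Lasso / here the `ℓ₁` part vanishes). -/
theorem dirty_lam_gt_mu_sparse_part_zero {T n p : ℕ}
    (X : Fin T → Matrix (Fin n) (Fin p) ℝ) (Y : Fin T → Fin n → ℝ)
    (μ lam : ℝ) (hμ : 0 < μ) (hlam : 0 < lam) (h : μ < lam) :
    ∀ Θc Θs : Matrix (Fin p) (Fin T) ℝ,
      (∀ Θc' Θs' : Matrix (Fin p) (Fin T) ℝ,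
          dirtyObj X Y μ lam Θc Θs ≤ dirtyObj X Y μ lam Θc' Θs') →
      Θs = 0 := by
  intro Θc Θs hmin
  have key := hmin (Θc + Θs) 0
  simp only [dirtyObj, Matrix.add_apply, Matrix.zero_apply, add_zero, abs_zero,
    Finset.sum_const_zero, mul_zero] at key
  -- key : data + μ‖Θc‖₂₁ + λ‖Θs‖₁ ≤ data + μ‖Θc+Θs‖₂₁
  have hsum : ∑ j, Real.sqrt (∑ t, (Θc j t + Θs j t) ^ 2) ≤
      ∑ j, Real.sqrt (∑ t, (Θc j t) ^ 2) + ∑ j, ∑ t, |Θs j t| := by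
    rw [← Finset.sum_add_distrib]
    exact Finset.sum_le_sum fun j _ => sqrt_sum_sq_add_le (fun t => Θc j t) (fun t => Θs j t)
  have hS0 : 0 ≤ ∑ j, ∑ t, |Θs j t| :=
    Finset.sum_nonneg fun j _ => Finset.sum_nonneg fun t _ => abs_nonneg _
  have hle : lam * ∑ j, ∑ t, |Θs j t| ≤ μ * ∑ j, ∑ t, |Θs j t| := by nlinarith
  have hS : ∑ j, ∑ t, |Θs j t| = 0 := by nlinarith
  ext j t
  have hrow : ∑ t, |Θs j t| = 0 := by
    have := (Finset.sum_eq_zero_iff_of_nonneg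
      (fun j _ => Finset.sum_nonneg fun t _ => abs_nonneg (Θs j t))).mp hS j (Finset.mem_univ j)
    exact this
  have := (Finset.sum_eq_zero_iff_of_nonneg
    (fun t _ => abs_nonneg (Θs j t))).mp hrow t (Finset.mem_univ t)
  simpa [abs_eq_zero] using this
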